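/- Let 𝔠 be the Cantor set, X = 𝔠^A, P ⊆ X closed, and f : P → P a homeomorphism with f(P^{(κ)}) = P^{(κ)} for every cardinal κ. Let Γ ⊆ Λ be f-admissible subsets of A with Λ ∖ Γ countable, and let f_Γ, f_Λ denote the homeomorphisms of P_Γ, P_Λ induced by f. Suppose there exists a closed set F ⊆ P_Γ such that F × X_{Λ∖Γ} ⊆ P_Λ (under the identification X_Λ = X_Γ × X_{Λ∖Γ}) and f_Λ(F × X_{Λ∖Γ}) = f_Γ(F) × X_{Λ∖Γ}. Then there exist a closed G_δ-set L in P_Γ containing F and a homeomorphism f'_Λ : L × X_{Λ∖Γ} → f_Γ(L) × X_{Λ∖Γ} which is fiberwise with respect to f_Γ (i.e., π^Λ_Γ ∘ f'_Λ = f_Γ ∘ π^Λ_Γ) and extends the restriction of f_Λ to (L × X_{Λ∖Γ}) ∩ P_Λ. -/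
import Mathlib


universe u

open Set
open scoped Classical

section Aux

/-- In a compact Hausdorff totally disconnected space, disjoint compact sets can be
separated by a clopen set. -/
lemma clopen_sep {X : Type*} [TopologicalSpace X] [CompactSpace X] [T2Space X]
    [TotallyDisconnectedSpace X] {K₁ K₂ : Set X} (h₁ : IsCompact K₁) (h₂ : IsCompact K₂)
    (hd : Disjoint K₁ K₂) : ∃ S : Set X, IsClopen S ∧ K₁ ⊆ S ∧ Disjoint S K₂ := by
  have hU : IsOpen K₂ᶜ := h₂.isClosed.isOpen_compl
  have hcov : ∀ x ∈ K₁, ∃ V : Set X, IsClopen V ∧ x ∈ V ∧ V ⊆ K₂ᶜ := by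
    intro x hx
    exact compact_exists_isClopen_in_isOpen hU (disjoint_left.mp hd hx)
  choose V hVclopen hVmem hVsub using hcov
  obtain ⟨t, ht⟩ := h₁.elim_finite_subcover (fun x : K₁ => V x.1 x.2)
    (fun x => (hVclopen x.1 x.2).2) (fun x hx => mem_iUnion.mpr ⟨⟨x, hx⟩, hVmem x hx⟩)
  refine ⟨⋃ x ∈ t, V x.1 x.2, t.finite_toSet.isClopen_biUnion (fun x _ => hVclopen x.1 x.2),
    ?_, ?_⟩
  · intro x hx
    simpa using ht hx
  · rw [disjoint_left]
    intro a ha ha2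
    simp only [mem_iUnion] at ha
    obtain ⟨x, _, hxa⟩ := ha
    exact hVsub x.1 x.2 hxa ha2

/-- A continuous Boolean-family-valued map on a closed subset of a compact Hausdorff
totally disconnected space extends continuously to the whole space. -/
lemma extend_to_ambient {X : Type u} [TopologicalSpace X] [CompactSpace X] [T2Space X]
    [TotallyDisconnectedSpace X] {Q : Set X} (hQ : IsClosed Q) {ι : Type u}
    (φ : Q → ι → Bool) (hφ : Continuous φ) :
    ∃ ψ : X → ι → Bool, Continuous ψ ∧ ∀ y : Q, ψ y.1 = φ y := by
  haveI : CompactSpace Q := isCompact_iff_compactSpace.mp hQ.isCompact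
  have hT : ∀ i : ι, IsClopen {y : Q | φ y i = true} := by
    intro i
    have : Continuous fun y : Q => φ y i := (continuous_apply i).comp hφ
    exact (isClopen_discrete {true}).preimage this
  have key : ∀ i : ι, ∃ S : Set X, IsClopen S ∧
      (Subtype.val '' {y : Q | φ y i = true}) ⊆ S ∧
      Disjoint S (Subtype.val '' {y : Q | φ y i = true}ᶜ) := by
    intro i
    apply clopen_sep
    · exact ((hT i).1.isCompact).image continuous_subtype_val
    · exact ((hT i).compl.1.isCompact).image continuous_subtype_val
    · rw [disjoint_left]
      rintro a ⟨y, hy, rfl⟩ ⟨y', hy', hyy⟩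
      exact hy' (by rwa [Subtype.val_injective hyy.symm] at hy)
  choose S hSclopen hS1 hS2 using key
  refine ⟨fun x i => (S i).boolIndicator x, ?_, ?_⟩
  · exact continuous_pi fun i => (continuous_boolIndicator_iff_isClopen _).mpr (hSclopen i)
  · intro y
    funext i
    rcases hb : φ y i with _ | _
    · have : y.1 ∉ S i := by
        intro hmem
        exact (disjoint_left.mp (hS2 i) hmem) ⟨y, by simp [hb], rfl⟩
      simp [Set.boolIndicator, this]
    · have : y.1 ∈ S i := hS1 i ⟨y, by simp [hb], rfl⟩
      simp [Set.boolIndicator, this]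

/-- Variant of `extend_to_ambient` for maps into `ι → ℕ → Bool`. -/
lemma extend_to_ambient' {X : Type u} [TopologicalSpace X] [CompactSpace X] [T2Space X]
    [TotallyDisconnectedSpace X] {Q : Set X} (hQ : IsClosed Q) {ι : Type u}
    (φ : Q → ι → ℕ → Bool) (hφ : Continuous φ) :
    ∃ ψ : X → ι → ℕ → Bool, Continuous ψ ∧ ∀ y : Q, ψ y.1 = φ y := by
  obtain ⟨ψ', hψ'c, hψ'⟩ := extend_to_ambient hQ (fun y (p : ι × ℕ) => φ y p.1 p.2)
    (continuous_pi fun p => (continuous_apply p.2).comp ((continuous_apply p.1).comp hφ))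
  refine ⟨fun x i n => ψ' x (i, n), ?_, ?_⟩
  · exact continuous_pi fun i => continuous_pi fun n => (continuous_apply (i, n)).comp hψ'c
  · intro y
    funext i n
    exact congrFun (hψ' y) (i, n)

end Aux

/-- The projection of the Cantor cube `𝔠^A = A → (ℕ → Bool)` onto the subcube `𝔠^B`. -/
def proj {A : Type u} (B : Set A) (x : A → ℕ → Bool) : B → ℕ → Bool :=
  fun b => x b

/-- The projection of the subcube `𝔠^B` onto the subcube `𝔠^C` for `C ⊆ B`. -/
def projRes {A : Type u} {B C : Set A} (h : C ⊆ B) (y : B → ℕ → Bool) : C → ℕ → Bool :=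
  fun c => y ⟨c.1, h c.2⟩

section Glue

variable {A : Type u} {Γ Λ : Set A} (hΓΛ : Γ ⊆ Λ)

/-- Restriction of a point of `𝔠^Λ` to the coordinates in `Λ \ Γ`. -/
def resD (y : Λ → ℕ → Bool) : ↥(Λ \ Γ) → ℕ → Bool :=
  fun c => y ⟨c.1, c.2.1⟩

/-- Glue a point of `𝔠^Γ` and a point of `𝔠^(Λ\Γ)` to a point of `𝔠^Λ`. -/
noncomputable def glue (x : Γ → ℕ → Bool) (z : ↥(Λ \ Γ) → ℕ → Bool) : Λ → ℕ → Bool :=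
  fun a => if h : a.1 ∈ Γ then x ⟨a.1, h⟩ else z ⟨a.1, ⟨a.2, h⟩⟩

lemma glue_projRes_resD (y : Λ → ℕ → Bool) : glue (projRes hΓΛ y) (resD y) = y := by
  funext a
  by_cases h : a.1 ∈ Γ
  · simp only [glue, dif_pos h]; rfl
  · simp only [glue, dif_neg h]; rfl

lemma projRes_glue (x : Γ → ℕ → Bool) (z : ↥(Λ \ Γ) → ℕ → Bool) :
    projRes hΓΛ (glue x z) = x := by
  funext c
  simp only [projRes, glue, dif_pos c.2]

lemma resD_glue (x : Γ → ℕ → Bool) (z : ↥(Λ \ Γ) → ℕ → Bool) :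
    resD (Γ := Γ) (glue x z) = z := by
  funext c
  have : c.1 ∉ Γ := c.2.2
  simp only [resD, glue, dif_neg this]

lemma continuous_glue : Continuous fun p : (Γ → ℕ → Bool) × (↥(Λ \ Γ) → ℕ → Bool) =>
    (glue p.1 p.2 : Λ → ℕ → Bool) := by
  apply continuous_pi
  intro a
  by_cases h : a.1 ∈ Γ
  · simp only [glue, dif_pos h]
    exact (continuous_apply _).comp continuous_fst
  · simp only [glue, dif_neg h]
    exact (continuous_apply _).comp continuous_snd

lemma continuous_resD : Continuous (resD (Λ := Λ) (Γ := Γ)) :=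
  continuous_pi fun _ => continuous_apply _

lemma continuous_projRes : Continuous (projRes hΓΛ) :=
  continuous_pi fun _ => continuous_apply _

lemma continuous_proj {B : Set A} : Continuous (proj (A := A) B) :=
  continuous_pi fun _ => continuous_apply _

lemma projRes_proj (p : A → ℕ → Bool) : projRes hΓΛ (proj Λ p) = proj Γ p := rfl

end Glue

/-- The `λ`-interior of a set `P` in a topological space `Z`: for infinite `λ`, the set of
points `x ∈ P` that are contained in a `G_λ`-subset (an intersection of at most `λ` open sets)
of `Z` lying inside `P`; for finite `λ`, the ordinary interior of `P`. -/
def lamInterior {Z : Type u} [TopologicalSpace Z] (lam : Cardinal.{u}) (P : Set Z) : Set Z :=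
  if lam < Cardinal.aleph0 then interior P
  else {x | x ∈ P ∧ ∃ K : Set Z,
    (∃ S : Set (Set Z), (∀ U ∈ S, IsOpen U) ∧ Cardinal.mk S ≤ lam ∧ K = ⋂₀ S) ∧ x ∈ K ∧ K ⊆ P}

/-- The image of a subset `S` of the ambient space under a homeomorphism `f : P ≃ₜ K`
between subspaces, i.e. `f(S ∩ P)` viewed in the ambient space of `K`. -/
def imageOn {Z W : Type u} [TopologicalSpace Z] [TopologicalSpace W] {P : Set Z} {K : Set W}
    (f : P ≃ₜ K) (S : Set Z) : Set W :=
  Subtype.val '' (⇑f '' (Subtype.val ⁻¹' S))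

/-- Lemma 4.2 of the paper. Here the Cantor cube `𝔠^A` is `A → (ℕ → Bool)`, `Γ ⊆ Λ ⊆ A`
are `f`-admissible (with explicit induced homeomorphisms `f_Γ`, `f_Λ`), `Λ ∖ Γ` is countable,
and `F ⊆ P_Γ` is closed with `F × X_{Λ∖Γ} ⊆ P_Λ` and
`f_Λ(F × X_{Λ∖Γ}) = f_Γ(F) × X_{Λ∖Γ}`. The conclusion produces a closed `G_δ`-set `L` in
`P_Γ` containing `F` and a fiberwise (w.r.t. `f_Γ`) homeomorphism
`L × X_{Λ∖Γ} → f_Γ(L) × X_{Λ∖Γ}` extending `f_Λ` on `(L × X_{Λ∖Γ}) ∩ P_Λ`. -/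
theorem stmt14 {A : Type u} (P : Set (A → ℕ → Bool)) (hP : IsClosed P) (f : P ≃ₜ P)
    (hf : ∀ κ : Cardinal.{u}, imageOn f (lamInterior κ P) = lamInterior κ P)
    (Γ Λ : Set A) (hΓΛ : Γ ⊆ Λ) (hdiff : (Λ \ Γ).Countable)
    (fΓ : (proj Γ '' P : Set (Γ → ℕ → Bool)) ≃ₜ (proj Γ '' P : Set (Γ → ℕ → Bool)))
    (hfΓ : ∀ p : P, (fΓ ⟨proj Γ p.1, ⟨p.1, p.2, rfl⟩⟩).1 = proj Γ (f p).1)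
    (fΛ : (proj Λ '' P : Set (Λ → ℕ → Bool)) ≃ₜ (proj Λ '' P : Set (Λ → ℕ → Bool)))
    (hfΛ : ∀ p : P, (fΛ ⟨proj Λ p.1, ⟨p.1, p.2, rfl⟩⟩).1 = proj Λ (f p).1)
    (F : Set (Γ → ℕ → Bool)) (hFc : IsClosed F) (hFP : F ⊆ proj Γ '' P)
    (hFcyl : {y : Λ → ℕ → Bool | projRes hΓΛ y ∈ F} ⊆ proj Λ '' P)
    (hFeq : imageOn fΛ {y : Λ → ℕ → Bool | projRes hΓΛ y ∈ F} =
      {y : Λ → ℕ → Bool | projRes hΓΛ y ∈ imageOn fΓ F}) :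
    ∃ L : Set (Γ → ℕ → Bool), ∃ hLP : L ⊆ proj Γ '' P, F ⊆ L ∧ IsClosed L ∧
      (∃ U : ℕ → Set (Γ → ℕ → Bool), (∀ n, IsOpen (U n)) ∧
        L = (proj Γ '' P) ∩ ⋂ n, U n) ∧
      ∃ f' : ({y : Λ → ℕ → Bool | projRes hΓΛ y ∈ L} : Set (Λ → ℕ → Bool)) ≃ₜ
          ({y : Λ → ℕ → Bool | projRes hΓΛ y ∈ imageOn fΓ L} : Set (Λ → ℕ → Bool)),
        (∀ y : ({y : Λ → ℕ → Bool | projRes hΓΛ y ∈ L} : Set (Λ → ℕ → Bool)),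
          projRes hΓΛ (f' y).1 = (fΓ ⟨projRes hΓΛ y.1, hLP y.2⟩).1) ∧
        (∀ (y : Λ → ℕ → Bool) (hy1 : projRes hΓΛ y ∈ L) (hy2 : y ∈ proj Λ '' P),
          (f' ⟨y, hy1⟩).1 = (fΛ ⟨y, hy2⟩).1) := by
  classical
  -- basic compactness facts
  have hPc : IsCompact P := hP.isCompact
  have hGc : IsCompact (proj Γ '' P) := hPc.image continuous_proj
  have hQc : IsCompact (proj Λ '' P) := hPc.image continuous_proj
  have hGcl : IsClosed (proj Γ '' P) := hGc.isClosed
  have hQcl : IsClosed (proj Λ '' P) := hQc.isClosed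
  -- projections of elements of `P_Λ` to `P_Γ`
  have hQG : ∀ y : ↥(proj Λ '' P), projRes hΓΛ y.1 ∈ proj Γ '' P := by
    rintro ⟨y, p, hp, rfl⟩
    exact ⟨p, hp, rfl⟩
  -- fΛ is fiberwise over fΓ
  have fib : ∀ (y : ↥(proj Λ '' P)) (h : projRes hΓΛ y.1 ∈ proj Γ '' P),
      projRes hΓΛ (fΛ y).1 = (fΓ ⟨projRes hΓΛ y.1, h⟩).1 := by
    rintro ⟨y, hy⟩ h
    obtain ⟨p, hp, rfl⟩ := hy
    have h1 := hfΛ ⟨p, hp⟩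
    have h2 := hfΓ ⟨p, hp⟩
    have e1 : (⟨proj Λ p, ⟨p, hp, rfl⟩⟩ : ↥(proj Λ '' P)) =
        ⟨proj Λ (⟨p, hp⟩ : ↥P).1, ⟨(⟨p, hp⟩ : ↥P).1, (⟨p, hp⟩ : ↥P).2, rfl⟩⟩ := rfl
    have e2 : (⟨projRes hΓΛ (proj Λ p), h⟩ : ↥(proj Γ '' P)) =
        ⟨proj Γ (⟨p, hp⟩ : ↥P).1, ⟨(⟨p, hp⟩ : ↥P).1, (⟨p, hp⟩ : ↥P).2, rfl⟩⟩ := rfl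
    calc projRes hΓΛ (fΛ ⟨proj Λ p, ⟨p, hp, rfl⟩⟩).1
        = projRes hΓΛ (proj Λ (f ⟨p, hp⟩).1) := by rw [e1, h1]
      _ = proj Γ (f ⟨p, hp⟩).1 := projRes_proj hΓΛ _
      _ = (fΓ ⟨projRes hΓΛ (proj Λ p), h⟩).1 := by rw [e2, h2]
  -- fΛ.symm is fiberwise over fΓ.symm
  have fib' : ∀ (y : ↥(proj Λ '' P)) (h : projRes hΓΛ y.1 ∈ proj Γ '' P),
      projRes hΓΛ (fΛ.symm y).1 = (fΓ.symm ⟨projRes hΓΛ y.1, h⟩).1 := by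
    intro y h
    have h' := hQG (fΛ.symm y)
    have e := fib (fΛ.symm y) h'
    rw [fΛ.apply_symm_apply] at e
    have e2 : (⟨projRes hΓΛ y.1, h⟩ : ↥(proj Γ '' P)) =
        fΓ ⟨projRes hΓΛ (fΛ.symm y).1, h'⟩ := Subtype.ext e
    rw [e2, fΓ.symm_apply_apply]
  -- extend the fiber part of fΛ and fΛ.symm to the ambient cube
  obtain ⟨psi, psic, psiQ'⟩ := extend_to_ambient' hQcl
    (fun y : ↥(proj Λ '' P) => resD (Γ := Γ) (fΛ y).1)
    (continuous_resD.comp (continuous_subtype_val.comp fΛ.continuous))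
  obtain ⟨psi', psi'c, psi'Q'⟩ := extend_to_ambient' hQcl
    (fun y : ↥(proj Λ '' P) => resD (Γ := Γ) (fΛ.symm y).1)
    (continuous_resD.comp (continuous_subtype_val.comp fΛ.symm.continuous))
  have psiQ : ∀ (y : Λ → ℕ → Bool) (hy : y ∈ proj Λ '' P),
      psi y = resD (Γ := Γ) (fΛ ⟨y, hy⟩).1 := fun y hy => psiQ' ⟨y, hy⟩
  have psi'Q : ∀ (y : Λ → ℕ → Bool) (hy : y ∈ proj Λ '' P),
      psi' y = resD (Γ := Γ) (fΛ.symm ⟨y, hy⟩).1 := fun y hy => psi'Q' ⟨y, hy⟩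
  -- extend fΓ and fΓ.symm to the ambient cube
  obtain ⟨gext, gextc, gextQ'⟩ := extend_to_ambient' hGcl
    (fun x : ↥(proj Γ '' P) => (fΓ x).1) (continuous_subtype_val.comp fΓ.continuous)
  obtain ⟨g'ext, g'extc, g'extQ'⟩ := extend_to_ambient' hGcl
    (fun x : ↥(proj Γ '' P) => (fΓ.symm x).1) (continuous_subtype_val.comp fΓ.symm.continuous)
  have gextQ : ∀ (x : Γ → ℕ → Bool) (hx : x ∈ proj Γ '' P), gext x = (fΓ ⟨x, hx⟩).1 :=
    fun x hx => gextQ' ⟨x, hx⟩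
  have g'extQ : ∀ (x : Γ → ℕ → Bool) (hx : x ∈ proj Γ '' P), g'ext x = (fΓ.symm ⟨x, hx⟩).1 :=
    fun x hx => g'extQ' ⟨x, hx⟩
  -- the two correction maps
  set h₁ : ↥(proj Γ '' P) × (↥(Λ \ Γ) → ℕ → Bool) → (↥(Λ \ Γ) → ℕ → Bool) :=
    fun p => psi' (glue (fΓ p.1).1 (psi (glue p.1.1 p.2))) with hh₁def
  set h₂ : ↥(proj Γ '' P) × (↥(Λ \ Γ) → ℕ → Bool) → (↥(Λ \ Γ) → ℕ → Bool) :=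
    fun p => psi (glue p.1.1 (psi' (glue (fΓ p.1).1 p.2))) with hh₂def
  have hglue1 : Continuous fun p : ↥(proj Γ '' P) × (↥(Λ \ Γ) → ℕ → Bool) =>
      (glue p.1.1 p.2 : Λ → ℕ → Bool) :=
    continuous_glue.comp ((continuous_subtype_val.comp continuous_fst).prodMk continuous_snd)
  have hglue2 : Continuous fun p : ↥(proj Γ '' P) × (↥(Λ \ Γ) → ℕ → Bool) =>
      (glue (fΓ p.1).1 p.2 : Λ → ℕ → Bool) :=
    continuous_glue.comp ((continuous_subtype_val.comp
      (fΓ.continuous.comp continuous_fst)).prodMk continuous_snd)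
  have h₁c : Continuous h₁ := psi'c.comp (continuous_glue.comp
    ((continuous_subtype_val.comp (fΓ.continuous.comp continuous_fst)).prodMk
      (psic.comp hglue1)))
  have h₂c : Continuous h₂ := psic.comp (continuous_glue.comp
    ((continuous_subtype_val.comp continuous_fst).prodMk (psi'c.comp hglue2)))
  -- the good set
  set Lsub : Set ↥(proj Γ '' P) :=
    {x | ∀ z, h₁ (x, z) = z ∧ h₂ (x, z) = z} with hLsubdef
  set L : Set (Γ → ℕ → Bool) := Subtype.val '' Lsub with hLdef
  have hLG : L ⊆ proj Γ '' P := Subtype.coe_image_subset _ _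
  have hpreL : Subtype.val ⁻¹' L = Lsub := preimage_image_eq _ Subtype.val_injective
  -- F ⊆ L
  have hFL : F ⊆ L := by
    intro x hx
    refine ⟨⟨x, hFP hx⟩, ?_, rfl⟩
    intro z
    constructor
    · -- first condition
      have hyQ : glue x z ∈ proj Λ '' P := by
        apply hFcyl
        show projRes hΓΛ (glue x z) ∈ F
        rw [projRes_glue]
        exact hx
      have hpr : projRes hΓΛ (glue x z) ∈ proj Γ '' P := by
        rw [projRes_glue]; exact hFP hx
      obtain ⟨W, hWdef⟩ : ∃ W : ↥(proj Λ '' P), W = fΛ ⟨glue x z, hyQ⟩ := ⟨_, rfl⟩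
      have hpsi : psi (glue x z) = resD W.1 := by
        rw [hWdef]; exact psiQ _ hyQ
      have e1 : projRes hΓΛ W.1 = (fΓ (⟨x, hFP hx⟩ : ↥(proj Γ '' P))).1 := by
        rw [hWdef, fib ⟨glue x z, hyQ⟩ hpr]
        exact congrArg (fun t => (fΓ t).1) (Subtype.ext (projRes_glue hΓΛ x z))
      have e3 : glue ((fΓ (⟨x, hFP hx⟩ : ↥(proj Γ '' P))).1) (resD W.1) = W.1 := by
        rw [← e1]
        exact glue_projRes_resD hΓΛ _
      show psi' (glue ((fΓ (⟨x, hFP hx⟩ : ↥(proj Γ '' P))).1) (psi (glue x z))) = z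
      rw [hpsi, e3, psi'Q _ W.2, Subtype.coe_eta, hWdef, fΛ.symm_apply_apply]
      exact resD_glue x z
    · -- second condition
      have hy'Q : glue ((fΓ (⟨x, hFP hx⟩ : ↥(proj Γ '' P))).1) z ∈ proj Λ '' P := by
        have hmem : (fΓ (⟨x, hFP hx⟩ : ↥(proj Γ '' P))).1 ∈ imageOn fΓ F :=
          ⟨fΓ ⟨x, hFP hx⟩, ⟨⟨x, hFP hx⟩, hx, rfl⟩, rfl⟩
        have h4 : glue ((fΓ (⟨x, hFP hx⟩ : ↥(proj Γ '' P))).1) z ∈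
            {y : Λ → ℕ → Bool | projRes hΓΛ y ∈ imageOn fΓ F} := by
          show projRes hΓΛ _ ∈ imageOn fΓ F
          rw [projRes_glue]
          exact hmem
        rw [← hFeq] at h4
        obtain ⟨b, _, hbe⟩ := h4
        rw [← hbe]
        exact b.2
      have hpr' : projRes hΓΛ (glue ((fΓ (⟨x, hFP hx⟩ : ↥(proj Γ '' P))).1) z) ∈
          proj Γ '' P := by
        rw [projRes_glue]
        exact (fΓ ⟨x, hFP hx⟩).2
      obtain ⟨W, hWdef⟩ : ∃ W : ↥(proj Λ '' P),
          W = fΛ.symm ⟨glue ((fΓ (⟨x, hFP hx⟩ : ↥(proj Γ '' P))).1) z, hy'Q⟩ := ⟨_, rfl⟩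
      have hpsi' : psi' (glue ((fΓ (⟨x, hFP hx⟩ : ↥(proj Γ '' P))).1) z) = resD W.1 := by
        rw [hWdef]; exact psi'Q _ hy'Q
      have e1 : projRes hΓΛ W.1 = x := by
        rw [hWdef, fib' ⟨glue ((fΓ (⟨x, hFP hx⟩ : ↥(proj Γ '' P))).1) z, hy'Q⟩ hpr']
        have e5 : (⟨projRes hΓΛ (glue ((fΓ (⟨x, hFP hx⟩ : ↥(proj Γ '' P))).1) z), hpr'⟩ :
            ↥(proj Γ '' P)) = fΓ ⟨x, hFP hx⟩ := Subtype.ext (projRes_glue hΓΛ _ z)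
        rw [e5, fΓ.symm_apply_apply]
      have e3 : glue x (resD W.1) = W.1 := by
        rw [← e1]
        exact glue_projRes_resD hΓΛ _
      show psi (glue x (psi' (glue ((fΓ (⟨x, hFP hx⟩ : ↥(proj Γ '' P))).1) z))) = z
      rw [hpsi', e3, psiQ _ W.2, Subtype.coe_eta, hWdef, fΛ.apply_symm_apply]
      exact resD_glue _ z
  -- closedness
  haveI : CompactSpace ↥(proj Γ '' P) := isCompact_iff_compactSpace.mp hGc
  have hLsubCl : IsClosed Lsub := by
    have : Lsub = ⋂ z, ({x : ↥(proj Γ '' P) | h₁ (x, z) = z} ∩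
        {x : ↥(proj Γ '' P) | h₂ (x, z) = z}) := by
      ext x
      simp only [hLsubdef, mem_setOf_eq, mem_iInter, mem_inter_iff]
    rw [this]
    refine isClosed_iInter fun z => IsClosed.inter ?_ ?_
    · exact isClosed_eq (h₁c.comp (continuous_id.prodMk continuous_const)) continuous_const
    · exact isClosed_eq (h₂c.comp (continuous_id.prodMk continuous_const)) continuous_const
  have hLcl : IsClosed L := (hLsubCl.isCompact.image continuous_subtype_val).isClosed
  -- the Gδ structure
  haveI : Countable ↥(Λ \ Γ) := hdiff.to_subtype
  letI : MetricSpace (↥(Λ \ Γ) → ℕ → Bool) := TopologicalSpace.metrizableSpaceMetric _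
  have hOpen : ∀ n : ℕ, ∃ U : Set (Γ → ℕ → Bool), IsOpen U ∧
      Subtype.val ⁻¹' U = {x : ↥(proj Γ '' P) |
        ∀ z, dist (h₁ (x, z)) z < 1 / (n + 1) ∧ dist (h₂ (x, z)) z < 1 / (n + 1)} := by
    intro n
    have hO : IsOpen {p : ↥(proj Γ '' P) × (↥(Λ \ Γ) → ℕ → Bool) |
        dist (h₁ p) p.2 < 1 / (n + 1) ∧ dist (h₂ p) p.2 < 1 / (n + 1)} := by
      refine IsOpen.inter ?_ ?_
      · exact isOpen_lt (h₁c.dist continuous_snd) continuous_const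
      · exact isOpen_lt (h₂c.dist continuous_snd) continuous_const
    have hOsub : IsOpen {x : ↥(proj Γ '' P) |
        ∀ z, dist (h₁ (x, z)) z < 1 / (n + 1) ∧ dist (h₂ (x, z)) z < 1 / (n + 1)} := by
      rw [isOpen_iff_forall_mem_open]
      intro x hx
      obtain ⟨u, v, hu, _, hxu, hvu, huv⟩ := generalized_tube_lemma isCompact_singleton
        isCompact_univ hO (by
          rintro ⟨a, b⟩ ⟨ha, -⟩
          rcases ha with rfl
          exact hx b)
      refine ⟨u, ?_, hu, hxu rfl⟩
      intro a ha z
      exact huv (mk_mem_prod ha (hvu (mem_univ z)))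
    exact isOpen_induced_iff.mp hOsub
  choose U hUopen hUpre using hOpen
  have hLeq : L = (proj Γ '' P) ∩ ⋂ n, U n := by
    ext a
    constructor
    · rintro ⟨xs, hxs, rfl⟩
      refine ⟨xs.2, mem_iInter.mpr fun n => ?_⟩
      have : xs ∈ Subtype.val ⁻¹' (U n) := by
        rw [hUpre n]
        intro z
        have h0 := hxs z
        have hpos : (0 : ℝ) < 1 / (n + 1) := by positivity
        rw [h0.1, h0.2, dist_self]
        exact ⟨hpos, hpos⟩
      exact this
    · rintro ⟨haG, hiU⟩
      refine ⟨⟨a, haG⟩, ?_, rfl⟩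
      intro z
      have hd : ∀ n : ℕ, dist (h₁ (⟨a, haG⟩, z)) z < 1 / (n + 1) ∧
          dist (h₂ (⟨a, haG⟩, z)) z < 1 / (n + 1) := by
        intro n
        have : (⟨a, haG⟩ : ↥(proj Γ '' P)) ∈ Subtype.val ⁻¹' (U n) :=
          mem_iInter.mp hiU n
        rw [hUpre n] at this
        exact this z
      constructor
      · refine dist_le_zero.mp ?_
        by_contra hcon
        push_neg at hcon
        obtain ⟨n, hn⟩ := exists_nat_one_div_lt hcon
        exact absurd (hd n).1 (not_lt.mpr hn.le)
      · refine dist_le_zero.mp ?_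
        by_contra hcon
        push_neg at hcon
        obtain ⟨n, hn⟩ := exists_nat_one_div_lt hcon
        exact absurd (hd n).2 (not_lt.mpr hn.le)
  -- the total maps
  set tF : (Λ → ℕ → Bool) → (Λ → ℕ → Bool) :=
    fun w => glue (gext (projRes hΓΛ w)) (psi w) with htFdef
  set iF : (Λ → ℕ → Bool) → (Λ → ℕ → Bool) :=
    fun w => glue (g'ext (projRes hΓΛ w)) (psi' w) with hiFdef
  have tFc : Continuous tF :=
    continuous_glue.comp ((gextc.comp (continuous_projRes hΓΛ)).prodMk psic)
  have iFc : Continuous iF :=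
    continuous_glue.comp ((g'extc.comp (continuous_projRes hΓΛ)).prodMk psi'c)
  have himg : imageOn fΓ L = Subtype.val '' (⇑fΓ '' Lsub) := by
    rw [imageOn, hpreL]
  -- membership of elements of Lsub
  have memLsub : ∀ {w : Λ → ℕ → Bool} (hw : projRes hΓΛ w ∈ L),
      (⟨projRes hΓΛ w, hLG hw⟩ : ↥(proj Γ '' P)) ∈ Lsub := by
    intro w hw
    rw [← hpreL]
    exact hw
  -- key computation: projRes of tF
  have tF_fst : ∀ (w : Λ → ℕ → Bool) (hw : projRes hΓΛ w ∈ proj Γ '' P),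
      projRes hΓΛ (tF w) = (fΓ ⟨projRes hΓΛ w, hw⟩).1 := by
    intro w hw
    rw [htFdef]
    show projRes hΓΛ (glue (gext (projRes hΓΛ w)) (psi w)) = _
    rw [projRes_glue, gextQ _ hw]
  -- membership of tF-image
  have mem_tF : ∀ (w : Λ → ℕ → Bool) (hw : projRes hΓΛ w ∈ L),
      projRes hΓΛ (tF w) ∈ imageOn fΓ L := by
    intro w hw
    rw [tF_fst w (hLG hw), himg]
    exact ⟨fΓ ⟨projRes hΓΛ w, hLG hw⟩, ⟨⟨projRes hΓΛ w, hLG hw⟩, memLsub hw, rfl⟩, rfl⟩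
  -- structure of points in the image cylinder
  have img_struct : ∀ (w : Λ → ℕ → Bool) (hw : projRes hΓΛ w ∈ imageOn fΓ L),
      ∃ xs : ↥(proj Γ '' P), xs ∈ Lsub ∧ (fΓ xs).1 = projRes hΓΛ w := by
    intro w hw
    rw [himg] at hw
    obtain ⟨b, hb, hbe⟩ := hw
    obtain ⟨xs, hxs, rfl⟩ := hb
    exact ⟨xs, hxs, hbe⟩
  -- key computation: projRes of iF
  have iF_fst : ∀ (w : Λ → ℕ → Bool) (xs : ↥(proj Γ '' P)) (_ : xs ∈ Lsub)
      (he : (fΓ xs).1 = projRes hΓΛ w), projRes hΓΛ (iF w) = xs.1 := by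
    intro w xs hxs he
    rw [hiFdef]
    show projRes hΓΛ (glue (g'ext (projRes hΓΛ w)) (psi' w)) = _
    rw [projRes_glue]
    have hwG : projRes hΓΛ w ∈ proj Γ '' P := he ▸ (fΓ xs).2
    rw [g'extQ _ hwG]
    have : (⟨projRes hΓΛ w, hwG⟩ : ↥(proj Γ '' P)) = fΓ xs := Subtype.ext he.symm
    rw [this, fΓ.symm_apply_apply]
  -- membership of iF-image
  have mem_iF : ∀ (w : Λ → ℕ → Bool) (hw : projRes hΓΛ w ∈ imageOn fΓ L),
      projRes hΓΛ (iF w) ∈ L := by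
    intro w hw
    obtain ⟨xs, hxs, he⟩ := img_struct w hw
    rw [iF_fst w xs hxs he]
    exact ⟨xs, hxs, rfl⟩
  -- left inverse
  have leftKey : ∀ (w : Λ → ℕ → Bool) (hw : projRes hΓΛ w ∈ L), iF (tF w) = w := by
    intro w hw
    have hxs := memLsub hw
    have htf : projRes hΓΛ (tF w) = (fΓ ⟨projRes hΓΛ w, hLG hw⟩).1 := tF_fst w (hLG hw)
    have e1 : projRes hΓΛ (iF (tF w)) = projRes hΓΛ w :=
      iF_fst (tF w) ⟨projRes hΓΛ w, hLG hw⟩ hxs htf.symm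
    have e2 : resD (Γ := Γ) (iF (tF w)) = resD (Γ := Γ) w := by
      rw [hiFdef]
      show resD (glue (g'ext (projRes hΓΛ (tF w))) (psi' (tF w))) = _
      rw [resD_glue]
      have hwrepr : w = glue (projRes hΓΛ w) (resD w) := (glue_projRes_resD hΓΛ w).symm
      have hthis : psi' (tF w) = h₁ (⟨projRes hΓΛ w, hLG hw⟩, resD w) := by
        rw [hh₁def, htFdef]
        show psi' (glue (gext (projRes hΓΛ w)) (psi w)) =
          psi' (glue ((fΓ (⟨projRes hΓΛ w, hLG hw⟩ : ↥(proj Γ '' P))).1)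
            (psi (glue (projRes hΓΛ w) (resD w))))
        rw [gextQ _ (hLG hw), glue_projRes_resD hΓΛ w]
      rw [hthis, (hxs (resD w)).1]
    calc iF (tF w) = glue (projRes hΓΛ (iF (tF w))) (resD (iF (tF w))) :=
          (glue_projRes_resD hΓΛ _).symm
      _ = glue (projRes hΓΛ w) (resD w) := by rw [e1, e2]
      _ = w := glue_projRes_resD hΓΛ w
  -- right inverse
  have rightKey : ∀ (w : Λ → ℕ → Bool) (hw : projRes hΓΛ w ∈ imageOn fΓ L),
      tF (iF w) = w := by
    intro w hw
    obtain ⟨xs, hxs, he⟩ := img_struct w hw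
    have hif : projRes hΓΛ (iF w) = xs.1 := iF_fst w xs hxs he
    have e1 : projRes hΓΛ (tF (iF w)) = projRes hΓΛ w := by
      rw [tF_fst (iF w) (hif.symm ▸ xs.2)]
      have : (⟨projRes hΓΛ (iF w), hif.symm ▸ xs.2⟩ : ↥(proj Γ '' P)) = xs := Subtype.ext hif
      rw [this, he]
    have e2 : resD (Γ := Γ) (tF (iF w)) = resD (Γ := Γ) w := by
      rw [htFdef]
      show resD (glue (gext (projRes hΓΛ (iF w))) (psi (iF w))) = _
      rw [resD_glue]
      have hwG : projRes hΓΛ w ∈ proj Γ '' P := he ▸ (fΓ xs).2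
      have hthis : psi (iF w) = h₂ (xs, resD w) := by
        rw [hh₂def, hiFdef]
        show psi (glue (g'ext (projRes hΓΛ w)) (psi' w)) =
          psi (glue (xs.1) (psi' (glue ((fΓ xs).1) (resD w))))
        rw [g'extQ _ hwG]
        have e5 : (⟨projRes hΓΛ w, hwG⟩ : ↥(proj Γ '' P)) = fΓ xs := Subtype.ext he.symm
        rw [e5, fΓ.symm_apply_apply]
        rw [show glue ((fΓ xs).1) (resD (Γ := Γ) w) = w from by
          rw [he]; exact glue_projRes_resD hΓΛ w]
      rw [hthis, (hxs (resD w)).2]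
    calc tF (iF w) = glue (projRes hΓΛ (tF (iF w))) (resD (tF (iF w))) :=
          (glue_projRes_resD hΓΛ _).symm
      _ = glue (projRes hΓΛ w) (resD w) := by rw [e1, e2]
      _ = w := glue_projRes_resD hΓΛ w
  -- assemble the homeomorphism
  refine ⟨L, hLG, hFL, hLcl, ⟨U, hUopen, hLeq⟩, ?_⟩
  refine ⟨{
    toFun := fun y => ⟨tF y.1, mem_tF y.1 y.2⟩
    invFun := fun y => ⟨iF y.1, mem_iF y.1 y.2⟩
    left_inv := fun y => Subtype.ext (leftKey y.1 y.2)
    right_inv := fun y => Subtype.ext (rightKey y.1 y.2)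
    continuous_toFun := Continuous.subtype_mk (tFc.comp continuous_subtype_val) _
    continuous_invFun := Continuous.subtype_mk (iFc.comp continuous_subtype_val) _ }, ?_, ?_⟩
  · intro y
    exact tF_fst y.1 (hLG y.2)
  · intro y hy1 hy2
    show tF y = (fΛ ⟨y, hy2⟩).1
    have e1 : projRes hΓΛ (tF y) = projRes hΓΛ (fΛ ⟨y, hy2⟩).1 := by
      rw [tF_fst y (hLG hy1), fib ⟨y, hy2⟩ (hLG hy1)]
    have e2 : resD (Γ := Γ) (tF y) = resD (Γ := Γ) (fΛ ⟨y, hy2⟩).1 := by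
      rw [htFdef]
      show resD (glue (gext (projRes hΓΛ y)) (psi y)) = _
      rw [resD_glue, psiQ _ hy2]
    calc tF y = glue (projRes hΓΛ (tF y)) (resD (tF y)) := (glue_projRes_resD hΓΛ _).symm
      _ = glue (projRes hΓΛ (fΛ ⟨y, hy2⟩).1) (resD (fΛ ⟨y, hy2⟩).1) := by rw [e1, e2]
      _ = (fΛ ⟨y, hy2⟩).1 := glue_projRes_resD hΓΛ _
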